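/- Let s = (s_1,…,s_r) and t = (t_1,…,t_r) be r-tuples of non-negative integers and ζ a primitive n-th root of unity. Then the star sum satisfies H*_{n−1}(s; t; ζ) = (−1)^{w(s)} · H*_{n−1}(s̄; s̄ − t̄; ζ), where s̄ is the reverse of s and w(s) = s_1 + ⋯ + s_r. -/

import Mathlib

open Finset

/-- The q-analog of a natural number: `[k]_q = (1 - q^k)/(1 - q)`. -/
noncomputable def qnum (q : ℂ) (k : ℕ) : ℂ := (1 - q ^ k) / (1 - q)

/-- Nested sum for the star sum `H*_n(s;t;q)`, recursing from the top index;
the list is the reversed list of pairs `(s_i, t_i)`.  The inner bound is `k`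
(weak inequalities). -/
noncomputable def HstarRev (q : ℂ) : ℕ → List (ℕ × ℤ) → ℂ
  | _, [] => 1
  | n, (s, t) :: rest =>
      ∑ k ∈ Finset.Icc 1 n, q ^ ((k : ℤ) * t) / qnum q k ^ s * HstarRev q k rest

/-- `Hstar q n s t = H*_n(s;t;q) = Σ_{1 ≤ k_1 ≤ ⋯ ≤ k_r ≤ n} ∏ q^{k_i t_i}/[k_i]_q^{s_i}`. -/
noncomputable def Hstar (q : ℂ) (n : ℕ) (s : List ℕ) (t : List ℤ) : ℂ :=
  HstarRev q n (s.zip t).reverse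

/-! ### Auxiliary development -/

/-- the dual pair map `(a, b) ↦ (a, a - b)` -/
def dualP (p : ℕ × ℤ) : ℕ × ℤ := (p.1, (p.1 : ℤ) - p.2)

/-- weight of a list of pairs -/
def Wt (L : List (ℕ × ℤ)) : ℕ := (L.map Prod.fst).sum

/-- `HstarRev` with a terminal function applied at the innermost bound -/
noncomputable def HF (q : ℂ) : ℕ → List (ℕ × ℤ) → (ℕ → ℂ) → ℂ
  | m, [], φ => φ m
  | m, (a, b) :: rest, φ =>
      ∑ k ∈ Finset.Icc 1 m, q ^ ((k : ℤ) * b) / qnum q k ^ a * HF q k rest φ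

/-- dual nested sum with a lower bound, recursing from the bottom index -/
noncomputable def Bs (q : ℂ) (N : ℕ) : ℕ → List (ℕ × ℤ) → ℂ
  | _, [] => 1
  | lo, (a, b) :: rest =>
      ∑ j ∈ Finset.Icc lo N, q ^ ((j : ℤ) * b) / qnum q j ^ a * Bs q N j rest

lemma HF_one (q : ℂ) (L : List (ℕ × ℤ)) : ∀ m, HF q m L (fun _ => 1) = HstarRev q m L := by
  induction L with
  | nil => intro m; simp [HF, HstarRev]
  | cons p rest ih =>
      intro m
      obtain ⟨a, b⟩ := p
      simp only [HF, HstarRev]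
      exact Finset.sum_congr rfl fun k _ => by rw [ih k]

lemma HF_append (q : ℂ) (A B : List (ℕ × ℤ)) (φ : ℕ → ℂ) :
    ∀ m, HF q m (A ++ B) φ = HF q m A (fun k => HF q k B φ) := by
  induction A with
  | nil => intro m; simp [HF]
  | cons p rest ih =>
      intro m
      obtain ⟨a, b⟩ := p
      rw [List.cons_append]
      simp only [HF]
      refine Finset.sum_congr rfl fun k _ => ?_
      rw [← ih k]

lemma swap_Icc (N : ℕ) (F : ℕ → ℕ → ℂ) :
    ∑ b ∈ Icc 1 N, ∑ a ∈ Icc 1 b, F a b = ∑ a ∈ Icc 1 N, ∑ b ∈ Icc a N, F a b := by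
  refine Finset.sum_comm' ?_
  intro b a
  simp only [Finset.mem_Icc]
  omega

lemma bridge (q : ℂ) (N : ℕ) (R : List (ℕ × ℤ)) :
    ∀ (p : ℕ × ℤ) (φ : ℕ → ℂ),
      HF q N ((p :: R).reverse) φ
        = ∑ j ∈ Icc 1 N, q ^ ((j : ℤ) * p.2) / qnum q j ^ p.1 * φ j * Bs q N j R := by
  induction R with
  | nil =>
      intro p φ
      obtain ⟨a, b⟩ := p
      simp [HF, Bs]
  | cons p₂ R' ih =>
      intro p φ
      obtain ⟨a, b⟩ := p
      have hrev : ((a, b) :: p₂ :: R').reverse = (p₂ :: R').reverse ++ [(a, b)] := by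
        simp
      rw [hrev, HF_append]
      have hterm : ∀ k, HF q k [(a, b)] φ
          = ∑ j ∈ Icc 1 k, q ^ ((j : ℤ) * b) / qnum q j ^ a * φ j := by
        intro k
        simp only [HF]
      rw [ih p₂ (fun k => HF q k [(a, b)] φ)]
      obtain ⟨a₂, b₂⟩ := p₂
      have step1 : ∑ j₂ ∈ Icc 1 N,
            q ^ ((j₂ : ℤ) * b₂) / qnum q j₂ ^ a₂ * HF q j₂ [(a, b)] φ * Bs q N j₂ R'
          = ∑ j₂ ∈ Icc 1 N, ∑ j ∈ Icc 1 j₂,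
              q ^ ((j : ℤ) * b) / qnum q j ^ a * φ j *
                (q ^ ((j₂ : ℤ) * b₂) / qnum q j₂ ^ a₂ * Bs q N j₂ R') := by
        refine Finset.sum_congr rfl fun j₂ _ => ?_
        rw [hterm j₂, Finset.mul_sum, Finset.sum_mul]
        exact Finset.sum_congr rfl fun j _ => by ring
      rw [step1, swap_Icc]
      refine Finset.sum_congr rfl fun j _ => ?_
      have hBs : Bs q N j ((a₂, b₂) :: R')
          = ∑ j₂ ∈ Icc j N, q ^ ((j₂ : ℤ) * b₂) / qnum q j₂ ^ a₂ * Bs q N j₂ R' := rfl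
      rw [hBs, Finset.mul_sum]

lemma Bs_one (q : ℂ) (N : ℕ) (R : List (ℕ × ℤ)) :
    Bs q N 1 R = HstarRev q N R.reverse := by
  cases R with
  | nil => simp [Bs, HstarRev]
  | cons p R' =>
      rw [← HF_one q (p :: R').reverse N, bridge]
      obtain ⟨a, b⟩ := p
      have hBs : Bs q N 1 ((a, b) :: R')
          = ∑ j ∈ Icc 1 N, q ^ ((j : ℤ) * b) / qnum q j ^ a * Bs q N j R' := rfl
      rw [hBs]
      exact (Finset.sum_congr rfl fun j _ => by ring).symm

lemma key {n : ℕ} {ζ : ℂ} (hz : ζ ^ n = 1) (hz0 : ζ ≠ 0) (a : ℕ) (b : ℤ) (k : ℕ)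
    (hk : k ≤ n) :
    ζ ^ ((k : ℤ) * b) / qnum ζ k ^ a
      = (-1) ^ a * (ζ ^ (((n - k : ℕ) : ℤ) * ((a : ℤ) - b)) / qnum ζ (n - k) ^ a) := by
  have hcast : ((n - k : ℕ) : ℤ) = (n : ℤ) - k := by
    push_cast [hk]; ring
  have hu0 : ζ ^ (k : ℤ) ≠ 0 := zpow_ne_zero _ hz0
  have h1 : ζ ^ (n - k) = (ζ ^ (k : ℤ))⁻¹ := by
    have hmul : ζ ^ (n - k) * ζ ^ (k : ℤ) = 1 := by
      rw [zpow_natCast, ← pow_add, Nat.sub_add_cancel hk, hz]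
    exact eq_inv_of_mul_eq_one_left hmul
  have h2 : (ζ ^ (k : ℤ))⁻¹ * ζ ^ k = 1 := by
    rw [zpow_natCast]; exact inv_mul_cancel₀ (pow_ne_zero _ hz0)
  have hq : qnum ζ (n - k) = -(ζ ^ (k : ℤ))⁻¹ * qnum ζ k := by
    unfold qnum
    rw [h1, mul_div_assoc']
    congr 1
    linear_combination -h2
  rw [hq]
  rw [mul_pow, neg_pow ((ζ ^ (k:ℤ))⁻¹), inv_pow, ← zpow_natCast (ζ ^ (k:ℤ)) a, ← zpow_mul]
  have hinv : ((-1 : ℂ) ^ a)⁻¹ = (-1) ^ a := by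
    rw [← inv_pow, inv_neg, inv_one]
  have hn2 : ((-1 : ℂ) ^ a) * ((-1 : ℂ) ^ a) = 1 := by
    rw [← mul_pow]; norm_num
  have hEU : ζ ^ (((n - k : ℕ) : ℤ) * ((a : ℤ) - b)) * ζ ^ ((k : ℤ) * (a : ℤ))
      = ζ ^ ((n : ℤ) * ((a : ℤ) - b)) * ζ ^ ((k : ℤ) * b) := by
    rw [← zpow_add₀ hz0, ← zpow_add₀ hz0, hcast]; ring_nf
  have hzn : ζ ^ ((n : ℤ) * ((a : ℤ) - b)) = 1 := by
    rw [zpow_mul, zpow_natCast, hz, one_zpow]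
  rw [hzn, one_mul] at hEU
  set E := ζ ^ (((n - k : ℕ) : ℤ) * ((a : ℤ) - b)) with hE
  set U := ζ ^ ((k : ℤ) * (a : ℤ)) with hU
  rw [div_eq_mul_inv, div_eq_mul_inv, mul_inv, mul_inv, inv_inv, hinv]
  rw [← hEU]
  ring_nf
  have h22 : ((-1:ℂ)) ^ (a * 2) = 1 := by
    rw [mul_comm, pow_mul]; norm_num
  rw [h22, mul_one]

lemma main_duality {n : ℕ} {ζ : ℂ} (hz : ζ ^ n = 1) (hz0 : ζ ≠ 0)
    (L : List (ℕ × ℤ)) : ∀ c, c < n →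
      HstarRev ζ c L = (-1) ^ (Wt L) * Bs ζ (n - 1) (n - c) (L.map dualP) := by
  induction L with
  | nil => intro c _; simp [HstarRev, Wt, Bs]
  | cons p rest ih =>
      intro c hc
      obtain ⟨a, b⟩ := p
      have hWt : Wt ((a, b) :: rest) = a + Wt rest := by simp [Wt]
      have hmap : ((a, b) :: rest).map dualP = (a, (a : ℤ) - b) :: rest.map dualP := rfl
      rw [hWt, hmap]
      have hLHS : HstarRev ζ c ((a, b) :: rest)
          = ∑ k ∈ Icc 1 c, ζ ^ ((k : ℤ) * b) / qnum ζ k ^ a * HstarRev ζ k rest := rfl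
      have hRHS : Bs ζ (n - 1) (n - c) ((a, (a : ℤ) - b) :: rest.map dualP)
          = ∑ j ∈ Icc (n - c) (n - 1),
              ζ ^ ((j : ℤ) * ((a : ℤ) - b)) / qnum ζ j ^ a *
                Bs ζ (n - 1) j (rest.map dualP) := rfl
      rw [hLHS, hRHS, Finset.mul_sum]
      refine Finset.sum_nbij' (fun k => n - k) (fun j => n - j) ?_ ?_ ?_ ?_ ?_
      · intro k hk; simp only [Finset.mem_Icc] at *; omega
      · intro j hj; simp only [Finset.mem_Icc] at *; omega
      · intro k hk; simp only [Finset.mem_Icc] at hk; show n - (n - k) = k; omega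
      · intro j hj; simp only [Finset.mem_Icc] at hj; show n - (n - j) = j; omega
      · intro k hk
        simp only [Finset.mem_Icc] at hk
        try dsimp only
        rw [ih k (lt_of_le_of_lt hk.2 hc)]
        rw [key hz hz0 a b k (le_of_lt (lt_of_le_of_lt hk.2 hc))]
        rw [pow_add]
        ring

lemma coe_zipWith (s : List ℕ) (t : List ℤ) :
    List.zipWith (fun a b => (a : ℤ) - b) s t
      = List.zipWith (fun (a : ℕ) (b : ℤ) => (a : ℤ) - b) s t := by
  show List.zipWith _ (s >>= fun a => pure (a : ℤ)) t = _
  rw [show (s >>= fun a => pure (a : ℤ)) = s.map (fun a => (a : ℤ)) by simp]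
  induction s generalizing t with
  | nil => simp
  | cons x s' ih =>
      cases t with
      | nil => simp
      | cons y t' => simpa using ih t'

lemma zip_zipWith (s : List ℕ) : ∀ t : List ℤ,
    s.zip (List.zipWith (fun (a : ℕ) (b : ℤ) => (a : ℤ) - b) s t) = (s.zip t).map dualP := by
  induction s with
  | nil => intro t; simp
  | cons x s' ih =>
      intro t
      cases t with
      | nil => simp
      | cons y t' => simp [dualP, ih t']

theorem stmt3 (n : ℕ) (hn : 0 < n) (ζ : ℂ) (hζ : IsPrimitiveRoot ζ n)
    (s : List ℕ) (t : List ℤ) (hlen : s.length = t.length) (ht : ∀ x ∈ t, 0 ≤ x) :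
    Hstar ζ (n - 1) s t
      = (-1) ^ s.sum *
        Hstar ζ (n - 1) s.reverse (List.zipWith (fun a b => (a : ℤ) - b) s t).reverse := by
  have hz : ζ ^ n = 1 := hζ.pow_eq_one
  have hz0 : ζ ≠ 0 := by
    intro h
    rw [h, zero_pow hn.ne'] at hz
    exact zero_ne_one hz
  rw [coe_zipWith]
  set u : List ℤ := List.zipWith (fun (a : ℕ) (b : ℤ) => (a : ℤ) - b) s t with hu
  have hulen : u.length = s.length := by
    rw [hu, List.length_zipWith, hlen, min_self]
  have hzipu : s.zip u = (s.zip t).map dualP := zip_zipWith s t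
  -- LHS via main duality
  have hmain := main_duality hz hz0 (s.zip t).reverse (n - 1) (by omega)
  have hone : n - (n - 1) = 1 := by omega
  rw [Hstar, hmain, hone]
  have hmap : ((s.zip t).reverse).map dualP = ((s.zip t).map dualP).reverse := by
    rw [List.map_reverse]
  rw [hmap, Bs_one, List.reverse_reverse]
  -- weights
  have hW : Wt ((s.zip t).reverse) = s.sum := by
    rw [Wt, List.map_reverse, List.sum_reverse]
    rw [List.map_fst_zip (le_of_eq hlen)]
  rw [hW]
  -- RHS
  congr 1
  rw [Hstar]
  have hrz : s.reverse.zip u.reverse = (s.zip u).reverse :=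
    (List.reverse_zipWith hulen.symm).symm
  rw [hrz, List.reverse_reverse, hzipu]
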